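/- Let T be a tree on n+1 vertices with n ≥ 2, and let D(T) be its distance matrix. Then the Smith normal form of D(T) over the integers is the diagonal matrix I_2 ⊕ 2·I_{n-2} ⊕ (2n); that is, the invariant factors of D(T) are 1, 1, followed by n−2 copies of 2, followed by 2n. -/

import Mathlib

open Matrix MvPolynomial

variable {V : Type*}

/-- The distance matrix of a graph: the `(u,v)` entry is the graph distance `d_G(u,v)`. -/
noncomputable def distMatrix [Fintype V] (G : SimpleGraph V) : Matrix V V ℤ :=
  fun u v => (G.dist u v : ℤ)

/-- The transmission of a vertex: the sum of the distances to all vertices. -/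
noncomputable def transmission [Fintype V] (G : SimpleGraph V) (u : V) : ℤ :=
  ∑ v, (G.dist u v : ℤ)

/-- The distance Laplacian matrix `D^L(G) = diag(tr) - D(G)`. -/
noncomputable def distLaplacian [Fintype V] [DecidableEq V] (G : SimpleGraph V) : Matrix V V ℤ :=
  Matrix.diagonal (transmission G) - distMatrix G

/-- The signless distance Laplacian matrix `D^Q(G) = diag(tr) + D(G)`. -/
noncomputable def signlessDistLaplacian [Fintype V] [DecidableEq V] (G : SimpleGraph V) : Matrix V V ℤ :=
  Matrix.diagonal (transmission G) + distMatrix G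

/-- Two integer matrices are equivalent over `ℤ` if `M = U * N * W` with `U`, `W`
invertible over `ℤ` (unimodular). -/
def MatEquivZ [Fintype V] [DecidableEq V] (M N : Matrix V V ℤ) : Prop :=
  ∃ U W : Matrix V V ℤ, IsUnit U.det ∧ IsUnit W.det ∧ M = U * N * W

/-- `f` lists the diagonal entries of the Smith normal form of `M`:
the diagonal matrix `diagonal f` is equivalent to `M` over `ℤ`, consecutive entries
divide each other, and the entries are nonnegative (normalization over `ℤ`). -/
def IsSNF {N : ℕ} (M : Matrix (Fin N) (Fin N) ℤ) (f : Fin N → ℤ) : Prop :=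
  MatEquivZ M (Matrix.diagonal f) ∧ (∀ i j : Fin N, i ≤ j → f i ∣ f j) ∧ ∀ i, 0 ≤ f i

/-- The ideal generated by the determinants of all `k × k` submatrices of `M`. -/
def minorsIdeal {R : Type*} [CommRing R] [Fintype V] (M : Matrix V V R) (k : ℕ) : Ideal R :=
  Ideal.span (Set.range fun p : (Fin k → V) × (Fin k → V) => (M.submatrix p.1 p.2).det)

/-- The generalized distance matrix `D(G, X_G) = diag(X_G) + D(G)` over `ℤ[X_G]`. -/
noncomputable def genDistMatrix [Fintype V] [DecidableEq V] (G : SimpleGraph V) :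
    Matrix V V (MvPolynomial V ℤ) :=
  Matrix.diagonal (fun u => MvPolynomial.X u) +
    (distMatrix G).map (fun a => (a : MvPolynomial V ℤ))

/-- The `k`-th distance ideal `I_k(G, X_G)`: the ideal of `ℤ[X_G]` generated by the
determinants of all `k × k` submatrices of the generalized distance matrix. -/
noncomputable def distIdeal [Fintype V] [DecidableEq V] (G : SimpleGraph V) (k : ℕ) :
    Ideal (MvPolynomial V ℤ) :=
  minorsIdeal (genDistMatrix G) k


set_option maxHeartbeats 1600000

section TreeAux
open SimpleGraph Walk

variable [DecidableEq V] {T : SimpleGraph V}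



variable {V : Type*} [DecidableEq V] {T : SimpleGraph V}

/-- In a tree, every path realizes the distance. -/
lemma tree_path_length (hT : T.IsTree) {u v : V} {p : T.Walk u v} (hp : p.IsPath) :
    p.length = T.dist u v := by
  obtain ⟨w, hw⟩ := (hT.isConnected.1 u v).exists_walk_length_eq_dist
  have hbp : w.bypass.IsPath := w.bypass_isPath
  have := (hT.existsUnique_path u v).unique hp hbp
  have h1 : p.length ≤ T.dist u v := by
    rw [this, ← hw]; exact w.length_bypass_le
  exact le_antisymm h1 (SimpleGraph.dist_le p)

lemma tree_dist_adj (hT : T.IsTree) {u v : V} (h : T.Adj u v) : T.dist u v = 1 := by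
  have : (Walk.cons h Walk.nil).IsPath := by simp [h.ne]
  simpa using (tree_path_length hT this).symm

/-- Splitting distances at a vertex on a path. -/
lemma tree_dist_split (hT : T.IsTree) {u v x : V} {p : T.Walk u v} (hp : p.IsPath)
    (hx : x ∈ p.support) : T.dist u x + T.dist x v = T.dist u v := by
  have h1 := tree_path_length hT (hp.takeUntil hx)
  have h2 := tree_path_length hT (hp.dropUntil hx)
  have h3 := tree_path_length hT hp
  have := congrArg Walk.length (p.take_spec hx)
  rw [Walk.length_append] at this
  omega

lemma tree_exists_path (hT : T.IsTree) (u v : V) :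
    ∃ p : T.Walk u v, p.IsPath ∧ p.length = T.dist u v := by
  obtain ⟨w, hw⟩ := (hT.isConnected.1 u v).exists_walk_length_eq_dist
  exact ⟨w.bypass, w.bypass_isPath, (tree_path_length hT w.bypass_isPath)⟩

lemma isPath_concat {u v w : V} {p : T.Walk u v} (hp : p.IsPath) (h : T.Adj v w)
    (hw : w ∉ p.support) : (p.concat h).IsPath := by
  rw [← Walk.isPath_reverse_iff, Walk.reverse_concat]
  exact hp.reverse.cons (by simpa using hw)

/-- For adjacent `v ~ w`, distances from any `u` differ by exactly one. -/
lemma tree_adj_dist (hT : T.IsTree) {v w : V} (h : T.Adj v w) (u : V) :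
    T.dist u w = T.dist u v + 1 ∨ T.dist u v = T.dist u w + 1 := by
  obtain ⟨p, hp, hl⟩ := tree_exists_path hT u v
  by_cases hw : w ∈ p.support
  · right
    have := tree_dist_split hT hp hw
    have h2 := tree_dist_adj hT (h.symm)
    have h3 : T.dist w v = T.dist v w := SimpleGraph.dist_comm
    omega
  · left
    have hq : (p.concat h).IsPath := isPath_concat hp h hw
    have := tree_path_length hT hq
    rw [Walk.length_concat] at this
    omega

/-- Edge rigidity: if the distance sign w.r.t. edge `x~y` flips across edge `v~w`,
then the two edges coincide. -/
lemma tree_edge_rigid (hT : T.IsTree) {x y v w : V} (hxy : T.Adj x y) (hvw : T.Adj v w)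
    (h1 : T.dist v x + 1 = T.dist v y) (h2 : T.dist w y + 1 = T.dist w x) :
    (v = x ∧ w = y) ∨ (v = y ∧ w = x) := by
  set k := T.dist v x with hk
  have htri1 : T.dist w x ≤ T.dist w v + T.dist v x := hT.isConnected.dist_triangle
  have htri2 : T.dist v y ≤ T.dist v w + T.dist w y := hT.isConnected.dist_triangle
  have hdvw : T.dist v w = 1 := tree_dist_adj hT hvw
  have hdwv : T.dist w v = 1 := by rw [SimpleGraph.dist_comm (u := w)]; exact hdvw
  have hwy : T.dist w y = k := by omega
  have hwx : T.dist w x = k + 1 := by omega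
  have hvy : T.dist v y = k + 1 := by omega
  obtain ⟨pvx, hpvx, hlvx⟩ := tree_exists_path hT v x
  obtain ⟨pwy, hpwy, hlwy⟩ := tree_exists_path hT w y
  have hyns : y ∉ pvx.support := by
    intro hmem
    have := tree_dist_split hT hpvx hmem
    omega
  have hvns : v ∉ pwy.support := by
    intro hmem
    have := tree_dist_split hT hpwy hmem
    omega
  have hW : (pvx.concat hxy).IsPath := isPath_concat hpvx hxy hyns
  have hW' : (Walk.cons hvw pwy).IsPath := hpwy.cons hvns
  have heq : pvx.concat hxy = Walk.cons hvw pwy := (hT.existsUnique_path v y).unique hW hW'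
  have hedge : s(x, y) ∈ (pvx.concat hxy).edges := by
    rw [Walk.edges_concat]; simp
  rw [heq] at hedge
  rw [Walk.edges_cons] at hedge
  rcases List.mem_cons.mp hedge with hc | hc
  · -- s(x,y) = s(v,w)
    rw [Sym2.eq_iff] at hc
    rcases hc with ⟨rfl, rfl⟩ | ⟨rfl, rfl⟩
    · exact Or.inl ⟨rfl, rfl⟩
    · exact Or.inr ⟨rfl, rfl⟩
  · exfalso
    have hxs : x ∈ pwy.support := pwy.fst_mem_support_of_mem_edges hc
    have := tree_dist_split hT hpwy hxs
    omega

lemma tree_exists_parent (hT : T.IsTree) {r i : V} (hi : i ≠ r) :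
    ∃ p : V, T.Adj i p ∧ T.dist p r + 1 = T.dist i r := by
  obtain ⟨q, hq, hl⟩ := tree_exists_path hT i r
  cases q with
  | nil => exact absurd rfl hi
  | cons h q' =>
    refine ⟨_, h, ?_⟩
    have hq' : q'.IsPath := hq.of_cons
    have := tree_path_length hT hq'
    rw [Walk.length_cons] at hl
    omega

noncomputable def treePar (hT : T.IsTree) (r : V) (i : V) : V :=
  if h : i = r then r else (tree_exists_parent hT h).choose

lemma treePar_adj (hT : T.IsTree) {r i : V} (hi : i ≠ r) : T.Adj i (treePar hT r i) := by
  rw [treePar, dif_neg hi]; exact (tree_exists_parent hT hi).choose_spec.1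

lemma treePar_dist (hT : T.IsTree) {r i : V} (hi : i ≠ r) :
    T.dist (treePar hT r i) r + 1 = T.dist i r := by
  rw [treePar, dif_neg hi]; exact (tree_exists_parent hT hi).choose_spec.2

/-- key: for distinct non-root `i j`, the sign of `d(j,·)` across edge `(i, par i)`
equals that of `d(par j, ·)`. -/
lemma tree_sign_const (hT : T.IsTree) {r i j : V} (hi : i ≠ r) (hj : j ≠ r) (hij : i ≠ j) :
    (T.dist j i : ℤ) - T.dist j (treePar hT r i) =
      (T.dist (treePar hT r j) i : ℤ) - T.dist (treePar hT r j) (treePar hT r i) := by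
  set pi := treePar hT r i
  set pj := treePar hT r j
  have hadji : T.Adj i pi := treePar_adj hT hi
  have hadjj : T.Adj j pj := treePar_adj hT hj
  have hdi : T.dist pi r + 1 = T.dist i r := treePar_dist hT hi
  have hdj : T.dist pj r + 1 = T.dist j r := treePar_dist hT hj
  have h1 := tree_adj_dist hT hadji j
  have h2 := tree_adj_dist hT hadji pj
  rcases h1 with h1 | h1 <;> rcases h2 with h2 | h2
  · push_cast; omega
  · exfalso
    have := tree_edge_rigid hT hadji hadjj
      (by omega : T.dist j i + 1 = T.dist j pi)
      (by omega : T.dist pj pi + 1 = T.dist pj i)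
    rcases this with ⟨h3, _⟩ | ⟨h3, h4⟩
    · exact hij h3.symm
    · rw [← h3] at hdi
      rw [h4] at hdj
      omega
  · exfalso
    have := tree_edge_rigid hT hadji hadjj.symm
      (by omega : T.dist pj i + 1 = T.dist pj pi)
      (by omega : T.dist j pi + 1 = T.dist j i)
    rcases this with ⟨h3, h4⟩ | ⟨_, h4⟩
    · rw [h3] at hdj
      rw [← h4] at hdi
      omega
    · exact hij h4.symm
  · push_cast; omega

section Conj

variable [Fintype V] (hT : T.IsTree) (r : V)

/-- The unipotent parent matrix. -/
noncomputable def parN (hT : T.IsTree) (r : V) : Matrix V V ℤ :=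
  fun i j => if i ≠ r ∧ j = treePar hT r i then 1 else 0

noncomputable def Mprime (r : V) : Matrix V V ℤ :=
  fun i j => if i = r then (if j = r then 0 else 1) else
    if j = r then 1 else if i = j then -2 else 0

lemma parN_mul_apply (A : Matrix V V ℤ) (i j : V) :
    (parN hT r * A) i j = if i = r then 0 else A (treePar hT r i) j := by
  rw [Matrix.mul_apply]
  by_cases hi : i = r
  · simp [parN, hi]
  · rw [if_neg hi]
    have h : ∀ k, parN hT r i k * A k j = if k = treePar hT r i then A k j else 0 := by
      intro k
      by_cases hk : k = treePar hT r i <;> simp [parN, hi, hk]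
    simp_rw [h]
    rw [Finset.sum_ite_eq' Finset.univ]
    simp

lemma mul_parNT_apply (A : Matrix V V ℤ) (i j : V) :
    (A * (parN hT r)ᵀ) i j = if j = r then 0 else A i (treePar hT r j) := by
  rw [Matrix.mul_apply]
  by_cases hj : j = r
  · simp [parN, Matrix.transpose_apply, hj]
  · rw [if_neg hj]
    have h : ∀ k, A i k * (parN hT r)ᵀ k j = if k = treePar hT r j then A i k else 0 := by
      intro k
      by_cases hk : k = treePar hT r j <;> simp [parN, Matrix.transpose_apply, hj, hk]
    simp_rw [h]
    rw [Finset.sum_ite_eq' Finset.univ]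
    simp

/-- The main conjugation identity. -/
lemma conj_distMatrix :
    (1 - parN hT r) * distMatrix T * (1 - parN hT r)ᵀ = Mprime r := by
  have expand : (1 - parN hT r) * distMatrix T * (1 - parN hT r)ᵀ =
      distMatrix T - parN hT r * distMatrix T
        - (distMatrix T * (parN hT r)ᵀ - parN hT r * (distMatrix T * (parN hT r)ᵀ)) := by
    rw [Matrix.transpose_sub, Matrix.transpose_one]
    noncomm_ring
  rw [expand]
  ext i j
  simp only [Matrix.sub_apply]
  rw [parN_mul_apply, mul_parNT_apply, parN_mul_apply, mul_parNT_apply]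
  by_cases hi : i = r <;> by_cases hj : j = r
  · rw [hi, hj]
    simp [Mprime, distMatrix]
  · rw [hi]
    have h1 := treePar_dist hT hj
    have h2 : T.dist r j = T.dist j r := SimpleGraph.dist_comm
    have h3 : T.dist r (treePar hT r j) = T.dist (treePar hT r j) r := SimpleGraph.dist_comm
    simp only [Mprime, distMatrix, if_neg hj, eq_self_iff_true, ite_true, if_true]
    omega
  · rw [hj]
    have h1 := treePar_dist hT hi
    have h2 : T.dist i r = T.dist r i := SimpleGraph.dist_comm
    have h2' : T.dist (treePar hT r i) r = T.dist r (treePar hT r i) := SimpleGraph.dist_comm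
    simp only [Mprime, distMatrix, if_neg hi, eq_self_iff_true, ite_true, if_true]
    omega
  · simp only [Mprime, if_neg hi, if_neg hj]
    by_cases hij : i = j
    · rw [if_pos hij, hij]
      have hadj : T.Adj j (treePar hT r j) := treePar_adj hT hj
      have h1 : T.dist j (treePar hT r j) = 1 := tree_dist_adj hT hadj
      have h2 : T.dist (treePar hT r j) j = 1 := by
        rw [SimpleGraph.dist_comm (u := treePar hT r j)]; exact h1
      have h3 : T.dist j j = 0 := SimpleGraph.dist_self
      have h4 : T.dist (treePar hT r j) (treePar hT r j) = 0 := SimpleGraph.dist_self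
      simp only [if_neg hj, distMatrix]
      omega
    · rw [if_neg hij]
      have key := tree_sign_const hT hi hj hij
      have c1 : T.dist i j = T.dist j i := SimpleGraph.dist_comm
      have c2 : T.dist (treePar hT r i) j = T.dist j (treePar hT r i) := SimpleGraph.dist_comm
      have c3 : T.dist i (treePar hT r j) = T.dist (treePar hT r j) i := SimpleGraph.dist_comm
      have c4 : T.dist (treePar hT r i) (treePar hT r j)
          = T.dist (treePar hT r j) (treePar hT r i) := SimpleGraph.dist_comm
      simp only [if_neg hi, distMatrix]
      omega

end Conj

section Nilp

variable {n : ℕ}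

lemma parN_nilpotent (hT : T.IsTree) [Fintype V] (r : V)
    (hcard : ∀ i : V, T.dist i r + 1 ≤ Fintype.card V) :
    IsNilpotent (parN hT r) := by
  refine ⟨Fintype.card V, ?_⟩
  have key : ∀ k : ℕ, ∀ i j : V, ((parN hT r) ^ k) i j ≠ 0 →
      k + T.dist j r ≤ T.dist i r := by
    intro k
    induction k with
    | zero =>
      intro i j h
      simp only [pow_zero, Matrix.one_apply] at h
      split_ifs at h with he
      · subst he; omega
      · exact absurd rfl h
    | succ k ih =>
      intro i j h
      rw [pow_succ', Matrix.mul_apply] at h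
      obtain ⟨l, _, hl⟩ := Finset.exists_ne_zero_of_sum_ne_zero h
      have hN : parN hT r i l ≠ 0 := left_ne_zero_of_mul hl
      have hP : ((parN hT r) ^ k) l j ≠ 0 := right_ne_zero_of_mul hl
      have : i ≠ r ∧ l = treePar hT r i := by
        by_contra hc
        simp only [parN, if_neg hc] at hN
        exact hN rfl
      obtain ⟨hir, rfl⟩ := this
      have hd := treePar_dist hT hir
      have := ih _ _ hP
      omega
  ext i j
  simp only [Matrix.zero_apply]
  by_contra h
  have := key (Fintype.card V) i j h
  have := hcard i
  omega

end Nilp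

end TreeAux

def dEnt (n i : ℕ) : ℤ := if i < 2 then 1 else if i < n then 2 else 2 * n

def mEnt (i j : ℕ) : ℤ :=
  if i = 0 then (if j = 0 then 0 else 1) else if j = 0 then 1 else if i = j then -2 else 0

def uEnt (n i j : ℕ) : ℤ :=
  if i = 0 then (if j = 1 then 1 else 0)
  else if i = 1 then (if j = 0 then 1 else 0)
  else if j = 0 then 1
  else if j = 1 then 2
  else if i = 2 then (if j = n then 1 else -1)
  else if i = n then (if j = 2 then 1 else 0)
  else if j = i then 1 else 0

def wEnt (n i j : ℕ) : ℤ :=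
  if i = 0 then (if j = 0 then 1 else if j = 1 then -2 else 0)
  else if i = 1 then (if j = 0 then 0 else 1)
  else if j ≤ 1 then 0
  else if i = n then -1
  else if i = 2 then (if j = n then -2 else -1)
  else if j = i then -2 else -1

def pEnt (n i j : ℕ) : ℤ :=
  if i = 0 then (if j = 1 then 1 else 0)
  else if i = 1 then (if j = 0 then 1 else 0)
  else if i = n then (if j = 0 then 2 - 2 * n else if j = 1 then 1 - (n : ℤ) else 1)
  else if j = 0 then -2
  else if j = 1 then -1
  else if i = 2 then (if j = n then 1 else 0)
  else if j = i then 1 else 0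

def qEnt (n i j : ℕ) : ℤ :=
  if i = 0 then (if j = 0 then 1 else if j = 1 then 2 else if j = n then 2 else 0)
  else if i = 1 then (if j = 1 then 1 else if j = n then 1 else 0)
  else if i = 2 then (if j ≤ 1 then 0 else if j = n then 1 - (n : ℤ) else 1)
  else if i = n then (if j = 2 then -1 else if j = n then 1 else 0)
  else if j = n then 1 else if j = i then -1 else 0

lemma sum_split (n : ℕ) (hn : 2 ≤ n) (f : ℕ → ℤ) :
    ∑ k ∈ Finset.range (n + 1), f k
      = f 0 + f 1 + (∑ k ∈ Finset.Ico 2 n, f k) + f n := by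
  rw [Finset.sum_range_succ]
  congr 1
  rw [Finset.range_eq_Ico,
    ← Finset.sum_Ico_consecutive (m := 0) (n := 2) (k := n) f (by omega) (by omega)]
  congr 1
  show ∑ k ∈ Finset.range 2, f k = f 0 + f 1
  rw [Finset.sum_range_succ, Finset.sum_range_one]

lemma sum_delta (s : Finset ℕ) (a : ℕ) (C E : ℤ) :
    ∑ k ∈ s, (if k = a then E else C)
      = s.card * C + (if a ∈ s then E - C else 0) := by
  have h : ∀ k, (if k = a then E else C) = C + (if k = a then E - C else 0) := by
    intro k; split_ifs <;> ring
  simp_rw [h]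
  rw [Finset.sum_add_distrib, Finset.sum_const, Finset.sum_ite_eq' s a]
  simp [nsmul_eq_mul]

section Rows

variable {n : ℕ} (hn : 2 ≤ n)

/- middle-row/column reductions, valid for 2 ≤ k < n -/

lemma pEnt_mid {k : ℕ} (h2 : 2 ≤ k) (hk : k < n) (j : ℕ) :
    pEnt n k j = if j = 0 then -2 else if j = 1 then -1
      else if k = 2 then (if j = n then 1 else 0) else if j = k then 1 else 0 := by
  simp only [pEnt]; split_ifs <;> (try contradiction) <;> omega

lemma wEnt_mid {k : ℕ} (h2 : 2 ≤ k) (hk : k < n) (j : ℕ) :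
    wEnt n k j = if j ≤ 1 then 0
      else if k = 2 then (if j = n then -2 else -1) else if j = k then -2 else -1 := by
  simp only [wEnt]; split_ifs <;> (try contradiction) <;> omega

lemma uEnt0_mid {k : ℕ} (h2 : 2 ≤ k) (hk : k < n) : uEnt n 0 k = 0 := by
  simp only [uEnt]; split_ifs <;> (try contradiction) <;> omega

lemma uEnt1_mid {k : ℕ} (h2 : 2 ≤ k) (hk : k < n) : uEnt n 1 k = 0 := by
  simp only [uEnt]; split_ifs <;> (try contradiction) <;> omega

lemma uEnt2_mid {k : ℕ} (h2 : 2 ≤ k) (hk : k < n) : uEnt n 2 k = -1 := by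
  simp only [uEnt]; split_ifs <;> (try contradiction) <;> omega

lemma uEntmid_mid {i k : ℕ} (hi : 3 ≤ i) (hin : i < n) (h2 : 2 ≤ k) (hk : k < n) :
    uEnt n i k = if k = i then 1 else 0 := by
  simp only [uEnt]; split_ifs <;> (try contradiction) <;> omega

lemma uEntn_mid {k : ℕ} (h3 : 3 ≤ n) (h2 : 2 ≤ k) (hk : k < n) :
    uEnt n n k = if k = 2 then 1 else 0 := by
  simp only [uEnt]; split_ifs <;> (try contradiction) <;> omega

lemma qEnt0_mid {k : ℕ} (h2 : 2 ≤ k) (hk : k < n) : qEnt n 0 k = 0 := by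
  simp only [qEnt]; split_ifs <;> (try contradiction) <;> omega

lemma qEnt1_mid {k : ℕ} (h2 : 2 ≤ k) (hk : k < n) : qEnt n 1 k = 0 := by
  simp only [qEnt]; split_ifs <;> (try contradiction) <;> omega

lemma qEnt2_mid {k : ℕ} (h2 : 2 ≤ k) (hk : k < n) : qEnt n 2 k = 1 := by
  simp only [qEnt]; split_ifs <;> (try contradiction) <;> omega

lemma qEntmid_mid {i k : ℕ} (hi : 3 ≤ i) (hin : i < n) (h2 : 2 ≤ k) (hk : k < n) :
    qEnt n i k = if k = i then -1 else 0 := by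
  simp only [qEnt]; split_ifs <;> (try contradiction) <;> omega

lemma qEntn_mid {k : ℕ} (h3 : 3 ≤ n) (h2 : 2 ≤ k) (hk : k < n) :
    qEnt n n k = if k = 2 then -1 else 0 := by
  simp only [qEnt]; split_ifs <;> (try contradiction) <;> omega

lemma dEnt_mid {k : ℕ} (h2 : 2 ≤ k) (hk : k < n) : dEnt n k = 2 := by
  simp only [dEnt]; split_ifs <;> (try contradiction) <;> omega

end Rows

section Boundary

variable {n : ℕ}

lemma pEnt_row0 (j : ℕ) : pEnt n 0 j = if j = 1 then 1 else 0 := by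
  simp only [pEnt]; split_ifs <;> (try contradiction) <;> omega
lemma pEnt_row1 (j : ℕ) : pEnt n 1 j = if j = 0 then 1 else 0 := by
  simp only [pEnt]; split_ifs <;> (try contradiction) <;> omega
lemma pEnt_rown (hn : 2 ≤ n) (j : ℕ) :
    pEnt n n j = if j = 0 then 2 - 2 * (n : ℤ) else if j = 1 then 1 - (n : ℤ) else 1 := by
  simp only [pEnt]; split_ifs <;> (try contradiction) <;> omega
lemma wEnt_row0 (j : ℕ) : wEnt n 0 j = if j = 0 then 1 else if j = 1 then -2 else 0 := by
  simp only [wEnt]; norm_num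
lemma wEnt_row1 (j : ℕ) : wEnt n 1 j = if j = 0 then 0 else 1 := by
  simp only [wEnt]; split_ifs <;> (try contradiction) <;> omega
lemma wEnt_rown (hn : 2 ≤ n) (j : ℕ) : wEnt n n j = if j ≤ 1 then 0 else -1 := by
  simp only [wEnt]; split_ifs <;> (try contradiction) <;> omega
lemma dEnt_0 : dEnt n 0 = 1 := by simp [dEnt]
lemma dEnt_1 : dEnt n 1 = 1 := by simp [dEnt]
lemma dEnt_n (hn : 2 ≤ n) : dEnt n n = 2 * n := by
  simp only [dEnt]; split_ifs <;> (try contradiction) <;> omega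

end Boundary

section Identities

variable {n : ℕ}

lemma UP_id (hn : 2 ≤ n) (i j : ℕ) (hi : i ≤ n) (hj : j ≤ n) :
    ∑ k ∈ Finset.range (n + 1), uEnt n i k * pEnt n k j
      = if i = j then 1 else 0 := by
  rw [sum_split n hn]
  have hcase : i = 0 ∨ i = 1 ∨ i = 2 ∨ (3 ≤ i ∧ i < n) ∨ (i = n ∧ 3 ≤ i) := by omega
  rcases hcase with rfl | rfl | rfl | ⟨h3, h4⟩ | ⟨h5, h3⟩
  · have hmid : ∀ k ∈ Finset.Ico 2 n, uEnt n 0 k * pEnt n k j = (0 : ℤ) := by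
      intro k hk; rw [Finset.mem_Ico] at hk
      rw [uEnt0_mid hk.1 hk.2, zero_mul]
    rw [Finset.sum_congr rfl hmid, Finset.sum_const_zero]
    have hu0 : uEnt n 0 0 = 0 := by norm_num [uEnt]
    have hu1 : uEnt n 0 1 = 1 := by norm_num [uEnt]
    have hun : uEnt n 0 n = 0 := by simp only [uEnt]; split_ifs <;> (try contradiction) <;> omega
    rw [hu0, hu1, hun, pEnt_row1]
    split_ifs <;> (try contradiction) <;> omega
  · have hmid : ∀ k ∈ Finset.Ico 2 n, uEnt n 1 k * pEnt n k j = (0 : ℤ) := by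
      intro k hk; rw [Finset.mem_Ico] at hk
      rw [uEnt1_mid hk.1 hk.2, zero_mul]
    rw [Finset.sum_congr rfl hmid, Finset.sum_const_zero]
    have hu0 : uEnt n 1 0 = 1 := by norm_num [uEnt]
    have hu1 : uEnt n 1 1 = 0 := by norm_num [uEnt]
    have hun : uEnt n 1 n = 0 := by simp only [uEnt]; split_ifs <;> (try contradiction) <;> omega
    rw [hu0, hu1, hun, pEnt_row0]
    split_ifs <;> (try contradiction) <;> omega
  · have hmid : ∀ k ∈ Finset.Ico 2 n, uEnt n 2 k * pEnt n k j
        = if k = (if j = n then 2 else j)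
          then (if j = 0 then 2 else if j = 1 then 1 else if j = n then -1
                else if j = 2 then 0 else -1)
          else (if j = 0 then 2 else if j = 1 then 1 else 0) := by
      intro k hk; rw [Finset.mem_Ico] at hk
      rw [uEnt2_mid hk.1 hk.2, pEnt_mid hk.1 hk.2]
      split_ifs <;> (try contradiction) <;> omega
    rw [Finset.sum_congr rfl hmid, sum_delta]
    have hu0 : uEnt n 2 0 = 1 := by norm_num [uEnt]
    have hu1 : uEnt n 2 1 = 2 := by norm_num [uEnt]
    have hun : uEnt n 2 n = 1 := by simp only [uEnt]; split_ifs <;> (try contradiction) <;> omega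
    rw [hu0, hu1, hun, pEnt_row0, pEnt_row1, pEnt_rown hn]
    simp only [Nat.card_Ico, Finset.mem_Ico]
    split_ifs <;> (try contradiction) <;> push_cast <;> omega
  · have hmid : ∀ k ∈ Finset.Ico 2 n, uEnt n i k * pEnt n k j
        = if k = i
          then (if j = 0 then -2 else if j = 1 then -1 else if j = i then 1 else 0)
          else 0 := by
      intro k hk; rw [Finset.mem_Ico] at hk
      rw [uEntmid_mid h3 h4 hk.1 hk.2, pEnt_mid hk.1 hk.2]
      split_ifs <;> (try contradiction) <;> omega
    rw [Finset.sum_congr rfl hmid, sum_delta]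
    have hu0 : uEnt n i 0 = 1 := by simp only [uEnt]; split_ifs <;> (try contradiction) <;> omega
    have hu1 : uEnt n i 1 = 2 := by simp only [uEnt]; split_ifs <;> (try contradiction) <;> omega
    have hun : uEnt n i n = 0 := by simp only [uEnt]; split_ifs <;> (try contradiction) <;> omega
    rw [hu0, hu1, hun, pEnt_row0, pEnt_row1, pEnt_rown hn]
    simp only [Nat.card_Ico, Finset.mem_Ico]
    split_ifs <;> (try contradiction) <;> push_cast <;> omega
  · rw [h5]
    have hmid : ∀ k ∈ Finset.Ico 2 n, uEnt n n k * pEnt n k j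
        = if k = 2
          then (if j = 0 then -2 else if j = 1 then -1 else if j = n then 1 else 0)
          else 0 := by
      intro k hk; rw [Finset.mem_Ico] at hk
      rw [uEntn_mid (by omega) hk.1 hk.2, pEnt_mid hk.1 hk.2]
      split_ifs <;> (try contradiction) <;> omega
    rw [Finset.sum_congr rfl hmid, sum_delta]
    have hu0 : uEnt n n 0 = 1 := by simp only [uEnt]; split_ifs <;> (try contradiction) <;> omega
    have hu1 : uEnt n n 1 = 2 := by simp only [uEnt]; split_ifs <;> (try contradiction) <;> omega
    have hun : uEnt n n n = 0 := by simp only [uEnt]; split_ifs <;> (try contradiction) <;> omega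
    rw [hu0, hu1, hun, pEnt_row0, pEnt_row1, pEnt_rown hn]
    simp only [Nat.card_Ico, Finset.mem_Ico]
    split_ifs <;> (try contradiction) <;> push_cast <;> omega

lemma QW_id (hn : 2 ≤ n) (i j : ℕ) (hi : i ≤ n) (hj : j ≤ n) :
    ∑ k ∈ Finset.range (n + 1), qEnt n i k * wEnt n k j
      = if i = j then 1 else 0 := by
  rw [sum_split n hn]
  have hcase : i = 0 ∨ i = 1 ∨ i = 2 ∨ (3 ≤ i ∧ i < n) ∨ (i = n ∧ 3 ≤ i) := by omega
  rcases hcase with rfl | rfl | rfl | ⟨h3, h4⟩ | ⟨h5, h3⟩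
  · have hmid : ∀ k ∈ Finset.Ico 2 n, qEnt n 0 k * wEnt n k j = (0 : ℤ) := by
      intro k hk; rw [Finset.mem_Ico] at hk
      rw [qEnt0_mid hk.1 hk.2, zero_mul]
    rw [Finset.sum_congr rfl hmid, Finset.sum_const_zero]
    have hq0 : qEnt n 0 0 = 1 := by norm_num [qEnt]
    have hq1 : qEnt n 0 1 = 2 := by norm_num [qEnt]
    have hqn : qEnt n 0 n = 2 := by simp only [qEnt]; split_ifs <;> (try contradiction) <;> omega
    rw [hq0, hq1, hqn, wEnt_row0, wEnt_row1, wEnt_rown hn]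
    split_ifs <;> (try contradiction) <;> omega
  · have hmid : ∀ k ∈ Finset.Ico 2 n, qEnt n 1 k * wEnt n k j = (0 : ℤ) := by
      intro k hk; rw [Finset.mem_Ico] at hk
      rw [qEnt1_mid hk.1 hk.2, zero_mul]
    rw [Finset.sum_congr rfl hmid, Finset.sum_const_zero]
    have hq0 : qEnt n 1 0 = 0 := by simp only [qEnt]; split_ifs <;> (try contradiction) <;> omega
    have hq1 : qEnt n 1 1 = 1 := by norm_num [qEnt]
    have hqn : qEnt n 1 n = 1 := by simp only [qEnt]; split_ifs <;> (try contradiction) <;> omega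
    rw [hq0, hq1, hqn, wEnt_row0, wEnt_row1, wEnt_rown hn]
    split_ifs <;> (try contradiction) <;> omega
  · have hmid : ∀ k ∈ Finset.Ico 2 n, qEnt n 2 k * wEnt n k j
        = if k = (if j = n then 2 else j)
          then (if j ≤ 1 then 0 else if j = n then -2 else if j = 2 then -1 else -2)
          else (if j ≤ 1 then 0 else -1) := by
      intro k hk; rw [Finset.mem_Ico] at hk
      rw [qEnt2_mid hk.1 hk.2, wEnt_mid hk.1 hk.2]
      split_ifs <;> (try contradiction) <;> omega
    rw [Finset.sum_congr rfl hmid, sum_delta]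
    have hq0 : qEnt n 2 0 = 0 := by norm_num [qEnt]
    have hq1 : qEnt n 2 1 = 0 := by norm_num [qEnt]
    have hqn : qEnt n 2 n = 1 - (n : ℤ) := by
      simp only [qEnt]; split_ifs <;> (try contradiction) <;> omega
    rw [hq0, hq1, hqn, wEnt_row0, wEnt_row1, wEnt_rown hn]
    simp only [Nat.card_Ico, Finset.mem_Ico]
    split_ifs <;> (try contradiction) <;> push_cast <;> ring_nf <;> omega
  · have hmid : ∀ k ∈ Finset.Ico 2 n, qEnt n i k * wEnt n k j
        = if k = i
          then (if j ≤ 1 then 0 else if j = i then 2 else 1)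
          else 0 := by
      intro k hk; rw [Finset.mem_Ico] at hk
      rw [qEntmid_mid h3 h4 hk.1 hk.2, wEnt_mid hk.1 hk.2]
      split_ifs <;> (try contradiction) <;> omega
    rw [Finset.sum_congr rfl hmid, sum_delta]
    have hq0 : qEnt n i 0 = 0 := by simp only [qEnt]; split_ifs <;> (try contradiction) <;> omega
    have hq1 : qEnt n i 1 = 0 := by simp only [qEnt]; split_ifs <;> (try contradiction) <;> omega
    have hqn : qEnt n i n = 1 := by simp only [qEnt]; split_ifs <;> (try contradiction) <;> omega
    rw [hq0, hq1, hqn, wEnt_row0, wEnt_row1, wEnt_rown hn]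
    simp only [Nat.card_Ico, Finset.mem_Ico]
    split_ifs <;> (try contradiction) <;> push_cast <;> omega
  · rw [h5]
    have hmid : ∀ k ∈ Finset.Ico 2 n, qEnt n n k * wEnt n k j
        = if k = 2
          then (if j ≤ 1 then 0 else if j = n then 2 else 1)
          else 0 := by
      intro k hk; rw [Finset.mem_Ico] at hk
      rw [qEntn_mid (by omega) hk.1 hk.2, wEnt_mid hk.1 hk.2]
      split_ifs <;> (try contradiction) <;> omega
    rw [Finset.sum_congr rfl hmid, sum_delta]
    have hq0 : qEnt n n 0 = 0 := by simp only [qEnt]; split_ifs <;> (try contradiction) <;> omega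
    have hq1 : qEnt n n 1 = 0 := by simp only [qEnt]; split_ifs <;> (try contradiction) <;> omega
    have hqn : qEnt n n n = 1 := by simp only [qEnt]; split_ifs <;> (try contradiction) <;> omega
    rw [hq0, hq1, hqn, wEnt_row0, wEnt_row1, wEnt_rown hn]
    simp only [Nat.card_Ico, Finset.mem_Ico]
    split_ifs <;> (try contradiction) <;> push_cast <;> omega

lemma UDW_id (hn : 2 ≤ n) (i j : ℕ) (hi : i ≤ n) (hj : j ≤ n) :
    ∑ k ∈ Finset.range (n + 1), uEnt n i k * (dEnt n k * wEnt n k j)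
      = mEnt i j := by
  rw [sum_split n hn]
  have hcase : i = 0 ∨ i = 1 ∨ i = 2 ∨ (3 ≤ i ∧ i < n) ∨ (i = n ∧ 3 ≤ i) := by omega
  rcases hcase with rfl | rfl | rfl | ⟨h3, h4⟩ | ⟨h5, h3⟩
  · have hmid : ∀ k ∈ Finset.Ico 2 n, uEnt n 0 k * (dEnt n k * wEnt n k j) = (0 : ℤ) := by
      intro k hk; rw [Finset.mem_Ico] at hk
      rw [uEnt0_mid hk.1 hk.2, zero_mul]
    rw [Finset.sum_congr rfl hmid, Finset.sum_const_zero]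
    have hu0 : uEnt n 0 0 = 0 := by norm_num [uEnt]
    have hu1 : uEnt n 0 1 = 1 := by norm_num [uEnt]
    have hun : uEnt n 0 n = 0 := by simp only [uEnt]; split_ifs <;> (try contradiction) <;> omega
    rw [hu0, hu1, hun, wEnt_row1, dEnt_0, dEnt_1]
    simp only [mEnt]
    split_ifs <;> (try contradiction) <;> omega
  · have hmid : ∀ k ∈ Finset.Ico 2 n, uEnt n 1 k * (dEnt n k * wEnt n k j) = (0 : ℤ) := by
      intro k hk; rw [Finset.mem_Ico] at hk
      rw [uEnt1_mid hk.1 hk.2, zero_mul]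
    rw [Finset.sum_congr rfl hmid, Finset.sum_const_zero]
    have hu0 : uEnt n 1 0 = 1 := by norm_num [uEnt]
    have hu1 : uEnt n 1 1 = 0 := by norm_num [uEnt]
    have hun : uEnt n 1 n = 0 := by simp only [uEnt]; split_ifs <;> (try contradiction) <;> omega
    rw [hu0, hu1, hun, wEnt_row0, dEnt_0, dEnt_1]
    simp only [mEnt]
    split_ifs <;> (try contradiction) <;> omega
  · have hmid : ∀ k ∈ Finset.Ico 2 n, uEnt n 2 k * (dEnt n k * wEnt n k j)
        = if k = (if j = n then 2 else j)
          then (if j ≤ 1 then 0 else if j = n then 4 else if j = 2 then 2 else 4)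
          else (if j ≤ 1 then 0 else 2) := by
      intro k hk; rw [Finset.mem_Ico] at hk
      rw [uEnt2_mid hk.1 hk.2, dEnt_mid hk.1 hk.2, wEnt_mid hk.1 hk.2]
      split_ifs <;> (try contradiction) <;> omega
    rw [Finset.sum_congr rfl hmid, sum_delta]
    have hu0 : uEnt n 2 0 = 1 := by norm_num [uEnt]
    have hu1 : uEnt n 2 1 = 2 := by norm_num [uEnt]
    have hun : uEnt n 2 n = 1 := by simp only [uEnt]; split_ifs <;> (try contradiction) <;> omega
    rw [hu0, hu1, hun, wEnt_row0, wEnt_row1, wEnt_rown hn, dEnt_0, dEnt_1, dEnt_n hn]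
    simp only [Nat.card_Ico, Finset.mem_Ico, mEnt]
    split_ifs <;> (try contradiction) <;> push_cast <;> ring_nf <;> omega
  · have hmid : ∀ k ∈ Finset.Ico 2 n, uEnt n i k * (dEnt n k * wEnt n k j)
        = if k = i
          then (if j ≤ 1 then 0 else if j = i then -4 else -2)
          else 0 := by
      intro k hk; rw [Finset.mem_Ico] at hk
      rw [uEntmid_mid h3 h4 hk.1 hk.2, dEnt_mid hk.1 hk.2, wEnt_mid hk.1 hk.2]
      split_ifs <;> (try contradiction) <;> omega
    rw [Finset.sum_congr rfl hmid, sum_delta]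
    have hu0 : uEnt n i 0 = 1 := by simp only [uEnt]; split_ifs <;> (try contradiction) <;> omega
    have hu1 : uEnt n i 1 = 2 := by simp only [uEnt]; split_ifs <;> (try contradiction) <;> omega
    have hun : uEnt n i n = 0 := by simp only [uEnt]; split_ifs <;> (try contradiction) <;> omega
    rw [hu0, hu1, hun, wEnt_row0, wEnt_row1, dEnt_0, dEnt_1]
    simp only [Nat.card_Ico, Finset.mem_Ico, mEnt]
    split_ifs <;> (try contradiction) <;> push_cast <;> omega
  · rw [h5]
    have hmid : ∀ k ∈ Finset.Ico 2 n, uEnt n n k * (dEnt n k * wEnt n k j)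
        = if k = 2
          then (if j ≤ 1 then 0 else if j = n then -4 else -2)
          else 0 := by
      intro k hk; rw [Finset.mem_Ico] at hk
      rw [uEntn_mid (by omega) hk.1 hk.2, dEnt_mid hk.1 hk.2, wEnt_mid hk.1 hk.2]
      split_ifs <;> (try contradiction) <;> omega
    rw [Finset.sum_congr rfl hmid, sum_delta]
    have hu0 : uEnt n n 0 = 1 := by simp only [uEnt]; split_ifs <;> (try contradiction) <;> omega
    have hu1 : uEnt n n 1 = 2 := by simp only [uEnt]; split_ifs <;> (try contradiction) <;> omega
    have hun : uEnt n n n = 0 := by simp only [uEnt]; split_ifs <;> (try contradiction) <;> omega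
    rw [hu0, hu1, hun, wEnt_row0, wEnt_row1, wEnt_rown hn, dEnt_0, dEnt_1, dEnt_n hn]
    simp only [Nat.card_Ico, Finset.mem_Ico, mEnt]
    split_ifs <;> (try contradiction) <;> push_cast <;> ring_nf <;> omega

end Identities


section Glue

variable {n : ℕ}

lemma fin_sum_eq (N : ℕ) (f : ℕ → ℤ) :
    ∑ k : Fin N, f (k : ℕ) = ∑ k ∈ Finset.range N, f k :=
  Fin.sum_univ_eq_sum_range f N

end Glue

/-- For a tree `T` on `n+1` vertices with `n ≥ 2`, the Smith normal form of
its distance matrix is `I₂ ⊕ 2·I_{n-2} ⊕ (2n)`, i.e. `D(T)` is equivalent over `ℤ` to the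
diagonal matrix with entries `1, 1, 2, …, 2, 2n` (which satisfies the divisibility
conditions, hence is the SNF). -/
theorem snf_distMatrix_tree (n : ℕ) (hn : 2 ≤ n) (T : SimpleGraph (Fin (n + 1)))
    (hT : T.IsTree) :
    MatEquivZ (distMatrix T)
      (Matrix.diagonal fun i : Fin (n + 1) =>
        if (i : ℕ) < 2 then (1 : ℤ) else if (i : ℕ) < n then 2 else 2 * n) := by
  classical
  -- the root
  set r : Fin (n + 1) := 0 with hr
  -- bound on distances
  have hcard : ∀ i : Fin (n + 1), T.dist i r + 1 ≤ Fintype.card (Fin (n + 1)) := by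
    intro i
    obtain ⟨p, hp, hl⟩ := tree_exists_path hT i r
    have := hp.length_lt
    omega
  -- the unipotent matrix R
  set R : Matrix (Fin (n + 1)) (Fin (n + 1)) ℤ := 1 - parN hT r with hR
  have hNil : IsNilpotent (parN hT r) := parN_nilpotent hT r hcard
  have hUnitR : IsUnit R := hNil.isUnit_one_sub
  have hdetR : IsUnit R.det := (Matrix.isUnit_iff_isUnit_det R).mp hUnitR
  have hdetRT : IsUnit Rᵀ.det := by rwa [Matrix.det_transpose]
  have hconj : R * distMatrix T * Rᵀ = Mprime r := conj_distMatrix hT r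
  -- explicit unimodular matrices
  set U : Matrix (Fin (n + 1)) (Fin (n + 1)) ℤ := Matrix.of fun i j => uEnt n i j with hU
  set P : Matrix (Fin (n + 1)) (Fin (n + 1)) ℤ := Matrix.of fun i j => pEnt n i j with hP
  set W : Matrix (Fin (n + 1)) (Fin (n + 1)) ℤ := Matrix.of fun i j => wEnt n i j with hW
  set Q : Matrix (Fin (n + 1)) (Fin (n + 1)) ℤ := Matrix.of fun i j => qEnt n i j with hQ
  set Δ : Matrix (Fin (n + 1)) (Fin (n + 1)) ℤ :=
    Matrix.diagonal (fun i : Fin (n + 1) =>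
      if (i : ℕ) < 2 then (1 : ℤ) else if (i : ℕ) < n then 2 else 2 * n) with hΔ
  have hΔd : ∀ i : Fin (n + 1), (if (i : ℕ) < 2 then (1 : ℤ) else if (i : ℕ) < n then 2 else 2 * n)
      = dEnt n i := by
    intro i; simp [dEnt]
  have hUP : U * P = 1 := by
    ext i j
    rw [Matrix.mul_apply, Matrix.one_apply]
    have : ∀ k : Fin (n + 1), U i k * P k j = uEnt n (i : ℕ) (k : ℕ) * pEnt n (k : ℕ) (j : ℕ) := by
      intro k; rfl
    simp_rw [this]
    rw [fin_sum_eq (n + 1) (fun k => uEnt n (i : ℕ) k * pEnt n k (j : ℕ))]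
    rw [UP_id hn (i : ℕ) (j : ℕ) (by omega) (by omega)]
    by_cases h : i = j
    · rw [if_pos h, if_pos (by rw [h])]
    · rw [if_neg h, if_neg (by intro hc; exact h (Fin.ext hc))]
  have hQW : Q * W = 1 := by
    ext i j
    rw [Matrix.mul_apply, Matrix.one_apply]
    have : ∀ k : Fin (n + 1), Q i k * W k j = qEnt n (i : ℕ) (k : ℕ) * wEnt n (k : ℕ) (j : ℕ) := by
      intro k; rfl
    simp_rw [this]
    rw [fin_sum_eq (n + 1) (fun k => qEnt n (i : ℕ) k * wEnt n k (j : ℕ))]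
    rw [QW_id hn (i : ℕ) (j : ℕ) (by omega) (by omega)]
    by_cases h : i = j
    · rw [if_pos h, if_pos (by rw [h])]
    · rw [if_neg h, if_neg (by intro hc; exact h (Fin.ext hc))]
  have hMp : ∀ i j : Fin (n + 1), Mprime r i j = mEnt (i : ℕ) (j : ℕ) := by
    intro i j
    have h1 : (i = r) = ((i : ℕ) = 0) := by
      rw [hr, Fin.ext_iff, Fin.val_zero]
    have h2 : (j = r) = ((j : ℕ) = 0) := by
      rw [hr, Fin.ext_iff, Fin.val_zero]
    have h3 : (i = j) = ((i : ℕ) = (j : ℕ)) := by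
      simp [Fin.ext_iff]
    simp only [Mprime, mEnt, h1, h2, h3]
  have hUDW : U * (Δ * W) = Mprime r := by
    ext i j
    rw [Matrix.mul_apply, hMp i j]
    have : ∀ k : Fin (n + 1), U i k * (Δ * W) k j
        = uEnt n (i : ℕ) (k : ℕ) * (dEnt n (k : ℕ) * wEnt n (k : ℕ) (j : ℕ)) := by
      intro k
      rw [hΔ, Matrix.diagonal_mul]
      rw [hΔd k]
      rfl
    simp_rw [this]
    rw [fin_sum_eq (n + 1) (fun k => uEnt n (i : ℕ) k * (dEnt n k * wEnt n k (j : ℕ)))]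
    exact UDW_id hn (i : ℕ) (j : ℕ) (by omega) (by omega)
  -- determinant facts
  have hdetU : IsUnit U.det := by
    refine IsUnit.of_mul_eq_one P.det ?_
    rw [← Matrix.det_mul, hUP, Matrix.det_one]
  have hdetW : IsUnit W.det := by
    refine IsUnit.of_mul_eq_one Q.det ?_
    rw [mul_comm, ← Matrix.det_mul, hQW, Matrix.det_one]
  have hdetRinv : IsUnit (R⁻¹).det := by
    refine IsUnit.of_mul_eq_one R.det ?_
    rw [← Matrix.det_mul, Matrix.nonsing_inv_mul R hdetR, Matrix.det_one]
  have hdetRTinv : IsUnit ((Rᵀ)⁻¹).det := by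
    refine IsUnit.of_mul_eq_one Rᵀ.det ?_
    rw [← Matrix.det_mul, Matrix.nonsing_inv_mul Rᵀ hdetRT, Matrix.det_one]
  -- assemble
  refine ⟨R⁻¹ * U, W * (Rᵀ)⁻¹, ?_, ?_, ?_⟩
  · rw [Matrix.det_mul]; exact hdetRinv.mul hdetU
  · rw [Matrix.det_mul]; exact hdetW.mul hdetRTinv
  · have hD : distMatrix T = R⁻¹ * Mprime r * (Rᵀ)⁻¹ := by
      have h1 : R⁻¹ * (R * distMatrix T * Rᵀ) * (Rᵀ)⁻¹ = distMatrix T := by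
        calc R⁻¹ * (R * distMatrix T * Rᵀ) * (Rᵀ)⁻¹
            = (R⁻¹ * R) * distMatrix T * (Rᵀ * (Rᵀ)⁻¹) := by noncomm_ring
          _ = distMatrix T := by
              rw [Matrix.nonsing_inv_mul R hdetR, Matrix.mul_nonsing_inv Rᵀ hdetRT,
                Matrix.one_mul, Matrix.mul_one]
      rw [← hconj]
      exact h1.symm
    rw [hD, ← hUDW]
    noncomm_ring
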